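/- Let g_a(z) = a z (1 − z) be the logistic map with parameter a. (1) If a ∈ ℂ is such that g_a has a parabolic periodic point in ℂ, then a is an algebraic integer. (2) If moreover a ∈ ℚ with 0 ≤ a ≤ 4 and g_a has a parabolic periodic point in ℂ, then a = 1 or a = 3. (3) Conversely, g_1 and g_3 each have a parabolic fixed point: g_1'(0) = 1 at the fixed point 0, and g_3'(2/3) = −1 at the fixed point 2/3. -/

import Mathlib

open Finset Polynomial

-- basic calculus
lemma logistic_hasDerivAt (a z : ℂ) :
    HasDerivAt (fun z : ℂ => a * z * (1 - z)) (a - 2*a*z) z := by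
  have h1 : HasDerivAt (fun z : ℂ => a * z) a z := by
    simpa using (hasDerivAt_id z).const_mul a
  have h2 : HasDerivAt (fun z : ℂ => 1 - z) (-1) z := by
    simpa using (hasDerivAt_id z).const_sub 1
  have h : HasDerivAt (fun z : ℂ => a * z * (1 - z)) (a * (1 - z) + a * z * -1) z := h1.mul h2
  convert h using 1
  ring

lemma logistic_differentiable (a : ℂ) :
    Differentiable ℂ (fun z : ℂ => a * z * (1 - z)) :=
  fun z => (logistic_hasDerivAt a z).differentiableAt

lemma deriv_iterate (g : ℂ → ℂ) (hg : Differentiable ℂ g) (n : ℕ) (z : ℂ) :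
    deriv (g^[n]) z = ∏ i ∈ range n, deriv g (g^[i] z) := by
  induction n with
  | zero => simp
  | succ n ih =>
    rw [Function.iterate_succ', prod_range_succ]
    have hd : DifferentiableAt ℂ (g^[n]) z := (hg.iterate n) z
    rw [deriv_comp z (hg _) hd, ih, mul_comm]

lemma multiplier_prod (a z₀ : ℂ) (n j : ℕ) (hn : 1 ≤ n) (hj : 0 < j)
    (hfix : (fun z : ℂ => a*z*(1-z))^[n] z₀ = z₀)
    (hpar : (deriv ((fun z : ℂ => a*z*(1-z))^[n]) z₀) ^ j = 1) :
    ∃ m : ℕ, 1 ≤ m ∧ (fun z : ℂ => a*z*(1-z))^[m] z₀ = z₀ ∧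
      ∏ i ∈ range m, (a - 2*a*((fun z : ℂ => a*z*(1-z))^[i] z₀)) = 1 := by
  set g : ℂ → ℂ := fun z : ℂ => a*z*(1-z) with hg
  have hfix' : ∀ k, g^[n*k] z₀ = z₀ := by
    intro k
    induction k with
    | zero => simp
    | succ k ih =>
      rw [Nat.mul_succ, Function.iterate_add_apply, hfix, ih]
  have hderiv : ∀ w, deriv g w = a - 2*a*w := fun w => (logistic_hasDerivAt a w).deriv
  have hprod : ∀ m, deriv (g^[m]) z₀ = ∏ i ∈ range m, (a - 2*a*(g^[i] z₀)) := by
    intro m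
    rw [deriv_iterate g (logistic_differentiable a) m z₀]
    exact Finset.prod_congr rfl fun i _ => hderiv _
  refine ⟨n*j, Nat.one_le_iff_ne_zero.mpr (by positivity), hfix' j, ?_⟩
  have key : ∀ k, ∏ i ∈ range (n*k), (a - 2*a*(g^[i] z₀))
      = (∏ i ∈ range n, (a - 2*a*(g^[i] z₀)))^k := by
    intro k
    induction k with
    | zero => simp
    | succ k ih =>
      rw [Nat.mul_succ, Finset.prod_range_add, ih, pow_succ]
      congr 1
      refine Finset.prod_congr rfl fun i _ => ?_
      rw [add_comm (n*k) i, Function.iterate_add_apply, hfix' k]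
  rw [key j, ← hprod n, hpar]

lemma isIntegral_of_mem_adjoin_inv {K : Type*} [Field K] {x : K} (hx : x ≠ 0)
    (h : x ∈ Algebra.adjoin ℤ ({x⁻¹} : Set K)) : IsIntegral ℤ x := by
  rw [Algebra.adjoin_singleton_eq_range_aeval] at h
  obtain ⟨p, hp'⟩ := h
  have hp : Polynomial.aeval x⁻¹ p = x := hp'
  set n := p.natDegree with hn
  have hs : x ^ (n+1) = ∑ i ∈ range (n+1), (p.coeff i : K) * x^(n-i) := by
    have h1 : Polynomial.aeval x⁻¹ p = ∑ i ∈ range (n+1), (p.coeff i : K) * (x⁻¹)^i := by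
      rw [Polynomial.aeval_eq_sum_range]
      exact Finset.sum_congr rfl fun i _ => by rw [zsmul_eq_mul]
    calc x^(n+1) = x^n * Polynomial.aeval x⁻¹ p := by rw [hp, pow_succ]
    _ = ∑ i ∈ range (n+1), (p.coeff i : K) * (x^n * (x⁻¹)^i) := by
        rw [h1, Finset.mul_sum]
        exact Finset.sum_congr rfl fun i _ => by ring
    _ = ∑ i ∈ range (n+1), (p.coeff i : K) * x^(n-i) := by
        refine Finset.sum_congr rfl fun i hi => ?_
        have hi' : i ≤ n := Nat.lt_succ_iff.mp (Finset.mem_range.mp hi)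
        congr 1
        rw [inv_pow, mul_inv_eq_iff_eq_mul₀ (pow_ne_zero i hx), ← pow_add,
          Nat.sub_add_cancel hi']
  refine ⟨X^(n+1) - ∑ i ∈ range (n+1), C (p.coeff i) * X^(n - i), ?_, ?_⟩
  · refine monic_X_pow_sub ?_
    refine lt_of_le_of_lt (degree_sum_le _ _) ?_
    rw [Finset.sup_lt_iff (by exact_mod_cast WithBot.bot_lt_coe (n+1))]
    intro i _
    refine lt_of_le_of_lt (degree_C_mul_X_pow_le _ _) ?_
    exact_mod_cast Nat.lt_succ_of_le (Nat.sub_le n i)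
  · rw [show (Polynomial.eval₂ (algebraMap ℤ K) x = Polynomial.aeval x) from rfl]
    have : ∀ c : ℤ, Polynomial.aeval x (C c) = (c : K) := fun c => by
      rw [Polynomial.aeval_C]; simp
    simp only [map_sub, map_pow, map_sum, map_mul, Polynomial.aeval_X, this]
    rw [hs]
    ring

lemma isIntegral_of_mem_all_valuationSubrings {K : Type*} [Field K] (x : K)
    (h : ∀ V : ValuationSubring K, x ∈ V) : IsIntegral ℤ x := by
  by_contra hni
  have hx0 : x ≠ 0 := fun e => hni (e ▸ isIntegral_zero)
  set y := x⁻¹ with hy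
  set S : Subring K := (Algebra.adjoin ℤ ({y} : Set K)).toSubring with hS
  have hyS : y ∈ S := Algebra.self_mem_adjoin_singleton ℤ y
  have hyu : (⟨y, hyS⟩ : S) ∈ nonunits S := by
    rw [mem_nonunits_iff]
    intro hu
    obtain ⟨z, hz⟩ := isUnit_iff_exists_inv.mp hu
    have hz' : y * (z : K) = 1 := congrArg Subtype.val hz
    have hzx : (z : K) = x := by
      have h5 : x * (y * (z : K)) = x * 1 := by rw [hz']
      rwa [hy, mul_one, mul_inv_cancel_left₀ hx0] at h5
    have hxS : x ∈ S := hzx ▸ z.2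
    exact hni (isIntegral_of_mem_adjoin_inv hx0 hxS)
  obtain ⟨m, hm, hym⟩ := exists_max_ideal_of_mem_nonunits hyu
  haveI := hm.isPrime
  obtain ⟨V, hV1, hV2⟩ := (LocalSubring.ofPrime S m).exists_le_valuationSubring
  have hxV : x ∈ V.toLocalSubring.toSubring := h V
  have hyL : y ∈ (LocalSubring.ofPrime S m).toSubring := LocalSubring.le_ofPrime S m hyS
  have hyV : y ∈ V.toLocalSubring.toSubring := hV1 hyL
  have hunit : IsUnit (⟨y, hyV⟩ : V.toLocalSubring.toSubring) :=
    isUnit_iff_exists_inv.mpr ⟨⟨x, hxV⟩, Subtype.ext (by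
      show y * x = 1
      rw [hy, inv_mul_cancel₀ hx0])⟩
  have h3 : IsUnit (⟨y, hyL⟩ : (LocalSubring.ofPrime S m).toSubring) := hV2.1 _ hunit
  have h4 : IsUnit (algebraMap S (LocalSubring.ofPrime S m).toSubring ⟨y, hyS⟩) := h3
  exact ((IsLocalization.AtPrime.isUnit_to_map_iff
    (LocalSubring.ofPrime S m).toSubring m (⟨y, hyS⟩ : S)).mp h4) hym

lemma part1 (a : ℂ)
    (h : ∃ z₀ : ℂ, ∃ n : ℕ, 1 ≤ n ∧ (fun z : ℂ => a * z * (1 - z))^[n] z₀ = z₀ ∧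
        ∃ j : ℕ, 0 < j ∧ (deriv ((fun z : ℂ => a * z * (1 - z))^[n]) z₀) ^ j = 1) :
    IsIntegral ℤ a := by
  obtain ⟨z₀, n, hn, hfix, j, hj, hpar⟩ := h
  obtain ⟨m, hm, hfixm, hprod⟩ := multiplier_prod a z₀ n j hn hj hfix hpar
  apply isIntegral_of_mem_all_valuationSubrings
  intro V
  rw [← ValuationSubring.valuation_le_one_iff]
  by_contra hlt
  push_neg at hlt
  set v := V.valuation with hv
  set g : ℂ → ℂ := fun z => a*z*(1-z) with hg
  set w : ℕ → ℂ := fun i => a/2 - a * (g^[i] z₀) with hw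
  set c : ℂ := a/2 - a^2/4 with hc
  have hA1 : 1 < v a := hlt
  have hA0 : (0 : V.ValueGroup) < v a := zero_lt_one.trans hA1
  have hwrec : ∀ i, w (i+1) = (w i)^2 + c := by
    intro i
    show a/2 - a * (g^[i+1] z₀) = (a/2 - a * (g^[i] z₀))^2 + (a/2 - a^2/4)
    rw [Function.iterate_succ_apply']
    show a/2 - a * (a * (g^[i] z₀) * (1 - g^[i] z₀)) = _
    ring
  have hwper : ∀ i, w (i + m) = w i := by
    intro i
    show a/2 - a * (g^[i+m] z₀) = a/2 - a * (g^[i] z₀)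
    rw [Function.iterate_add_apply, hfixm]
  have hprod2 : ∏ i ∈ range m, (2 * w i) = 1 := by
    rw [← hprod]
    refine Finset.prod_congr rfl fun i _ => ?_
    show 2 * (a/2 - a * (g^[i] z₀)) = a - 2*a*(g^[i] z₀)
    ring
  have h2V : (2:ℂ) ∈ V := by
    have : (1:ℂ) + 1 ∈ V := add_mem (one_mem V) (one_mem V)
    rw [one_add_one_eq_two] at this
    exact this
  have hv2 : v 2 ≤ 1 := by rwa [ValuationSubring.valuation_le_one_iff]
  have h4c : (4:ℂ) * c = 2*a - a^2 := by rw [hc]; ring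
  have hstep : v (2*a) < v (a^2) := by
    rw [map_mul, map_pow]
    calc v 2 * v a ≤ 1 * v a := mul_le_mul_left hv2 _
    _ = v a := one_mul _
    _ = v a * 1 := (mul_one _).symm
    _ < v a * v a := by
        rw [mul_comm (v a) 1]
        exact (mul_lt_mul_iff_of_pos_right hA0).mpr hA1
    _ = v a ^ 2 := (sq _).symm
  have hvc : (v 2)^2 * v c = (v a)^2 := by
    have h0 := congrArg v h4c
    rw [map_mul, v.map_sub_eq_of_lt_right hstep, map_pow,
      show (4:ℂ) = 2*2 by norm_num, map_mul, ← sq] at h0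
    exact h0
  have hc1 : 1 < v c := by
    have h1 : (v a)^2 ≤ v c := by
      calc (v a)^2 = (v 2)^2 * v c := hvc.symm
      _ ≤ 1 * v c := by
          refine mul_le_mul_left ?_ _
          calc (v 2)^2 = v 2 * v 2 := sq _
          _ ≤ 1 * 1 := mul_le_mul' hv2 hv2
          _ = 1 := one_mul 1
      _ = v c := one_mul _
    exact lt_of_lt_of_le (one_lt_pow₀ hA1 two_ne_zero) h1
  have hc0 : (0 : V.ValueGroup) < v c := zero_lt_one.trans hc1
  have B1 : ∀ i, ¬ (v c < (v (w i))^2) := by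
    intro i hi
    have hs1 : 1 < v (w i) := by
      by_contra hle
      push_neg at hle
      have h2 : (v (w i))^2 ≤ 1 := by
        calc (v (w i))^2 = v (w i) * v (w i) := sq _
        _ ≤ 1 * 1 := mul_le_mul' hle hle
        _ = 1 := one_mul 1
      exact absurd (hc1.trans hi) (not_lt.mpr h2)
    have hs0 : (0 : V.ValueGroup) < v (w i) := zero_lt_one.trans hs1
    have key : ∀ k, v (w (i+k)) = (v (w i))^(2^k) ∧ v c < ((v (w i))^(2^k))^2 := by
      intro k
      induction k with
      | zero => simpa using hi
      | succ k ih =>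
        obtain ⟨ih1, ih2⟩ := ih
        have e1 : ((v (w i))^(2^k))^2 = (v (w i))^(2^(k+1)) := by
          rw [← pow_mul, pow_succ]
        have hval : v (w (i+k+1)) = (v (w (i+k)))^2 := by
          have hlt2 : v c < v ((w (i+k))^2) := by
            rw [map_pow, ih1]
            exact e1 ▸ (e1 ▸ ih2)
          rw [hwrec (i+k), v.map_add_of_distinct_val hlt2.ne', max_eq_left hlt2.le, map_pow]
        have hx1 : (1 : V.ValueGroup) ≤ (v (w i))^(2^(k+1)) :=
          (one_lt_pow₀ hs1 (by positivity)).le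
        constructor
        · rw [show i + (k+1) = (i+k)+1 by omega, hval, ih1, e1]
        · calc v c < (v (w i))^(2^(k+1)) := e1 ▸ ih2
          _ = 1 * ((v (w i))^(2^(k+1))) := (one_mul _).symm
          _ ≤ (v (w i))^(2^(k+1)) * (v (w i))^(2^(k+1)) := mul_le_mul_left hx1 _
          _ = ((v (w i))^(2^(k+1)))^2 := (sq _).symm
    have hper := (key m).1
    rw [hwper i] at hper
    have h2m : 1 < 2^m := Nat.one_lt_two_pow_iff.mpr (by omega)
    have hx : v (w i) < (v (w i))^(2^m) := by
      calc v (w i) = 1 * v (w i) := (one_mul _).symm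
      _ < (v (w i))^(2^m - 1) * v (w i) :=
          (mul_lt_mul_iff_of_pos_right hs0).mpr (one_lt_pow₀ hs1 (by omega))
      _ = (v (w i))^(2^m) := by
          rw [← pow_succ, Nat.sub_add_cancel (by omega)]
    exact absurd hper (ne_of_lt hx)
  have B2 : ∀ i, (v (w i))^2 = v c := by
    intro i
    rcases lt_trichotomy ((v (w i))^2) (v c) with hlt2 | heq | hgt
    · exfalso
      apply B1 (i+1)
      have hne : v ((w i)^2) ≠ v c := by rw [map_pow]; exact hlt2.ne
      have hle : v ((w i)^2) ≤ v c := by rw [map_pow]; exact hlt2.le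
      have hval : v (w (i+1)) = v c := by
        rw [hwrec i, v.map_add_of_distinct_val hne, max_eq_right hle]
      rw [hval]
      calc v c = 1 * v c := (one_mul _).symm
      _ < v c * v c := (mul_lt_mul_iff_of_pos_right hc0).mpr hc1
      _ = (v c)^2 := (sq _).symm
    · exact heq
    · exact absurd hgt (B1 i)
  have hvp : ∏ i ∈ range m, v (2 * w i) = 1 := by
    rw [← map_prod v, hprod2, map_one]
  have hsq : ∏ i ∈ range m, (v (2 * w i))^2 = 1 := by
    rw [Finset.prod_pow, hvp, one_pow]
  have hterm : ∀ i ∈ range m, (v (2 * w i))^2 = (v a)^2 := by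
    intro i _
    rw [map_mul, mul_pow, B2 i, hvc]
  rw [Finset.prod_congr rfl hterm, Finset.prod_const, Finset.card_range] at hsq
  have hgt1 : 1 < ((v a)^2)^m := one_lt_pow₀ (one_lt_pow₀ hA1 two_ne_zero) (by omega)
  exact absurd hsq (ne_of_gt hgt1)

lemma sum_two_pow (N : ℕ) : ∑ i ∈ Finset.range N, 2^i = 2^N - 1 := by
  induction N with
  | zero => simp
  | succ k ih =>
    rw [Finset.sum_range_succ, ih]
    have : 1 ≤ 2^k := Nat.one_le_two_pow
    omega

lemma nat_pow_ne_one_complex {b : ℕ} (hb : 1 < b) {m : ℕ} (hm : 1 ≤ m) : ((b:ℂ))^m ≠ 1 := by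
  intro h
  have h2 : ((b^m : ℕ) : ℂ) = ((1:ℕ) : ℂ) := by push_cast; simpa using h
  have h3 := Nat.cast_inj (R := ℂ) |>.mp h2
  have h4 : 1 < b^m := Nat.one_lt_pow (by omega) hb
  omega

lemma excl_zero (z₀ : ℂ) (m : ℕ) (hm : 1 ≤ m)
    (hprod : ∏ i ∈ range m, ((0:ℂ) - 2*0*((fun z : ℂ => 0*z*(1-z))^[i] z₀)) = 1) : False := by
  rw [Finset.prod_eq_zero (Finset.mem_range.mpr hm) (by ring)] at hprod
  exact zero_ne_one hprod

lemma excl_two (z₀ : ℂ) (m : ℕ) (hm : 1 ≤ m)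
    (hfixm : (fun z : ℂ => 2*z*(1-z))^[m] z₀ = z₀)
    (hprod : ∏ i ∈ range m, ((2:ℂ) - 2*2*((fun z : ℂ => 2*z*(1-z))^[i] z₀)) = 1) : False := by
  set g : ℂ → ℂ := fun z => 2*z*(1-z) with hg
  set t : ℕ → ℂ := fun i => 1 - 2*(g^[i] z₀) with ht
  have htrec : ∀ i, t (i+1) = (t i)^2 := by
    intro i
    show 1 - 2*(g^[i+1] z₀) = (1 - 2*(g^[i] z₀))^2
    rw [Function.iterate_succ_apply']
    show 1 - 2*(2 * (g^[i] z₀) * (1 - g^[i] z₀)) = _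
    ring
  have htpow : ∀ i, t i = (t 0)^(2^i) := by
    intro i
    induction i with
    | zero => simp
    | succ i ih => rw [htrec i, ih, ← pow_mul, pow_succ]
  have hprod2 : ∏ i ∈ range m, (2 * t i) = 1 := by
    rw [← hprod]
    refine Finset.prod_congr rfl fun i _ => ?_
    show 2 * (1 - 2*(g^[i] z₀)) = 2 - 2*2*(g^[i] z₀)
    ring
  by_cases ht0 : t 0 = 0
  · rw [Finset.prod_eq_zero (Finset.mem_range.mpr hm) (by rw [htpow 0, ht0]; simp)] at hprod2
    exact zero_ne_one hprod2
  · have hper : (t 0)^(2^m) = t 0 := by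
      rw [← htpow m]
      show 1 - 2*(g^[m] z₀) = 1 - 2*(g^[0] z₀)
      rw [hfixm]; rfl
    have h1 : (t 0)^(2^m - 1) = 1 := by
      have e : (t 0)^(2^m - 1) * t 0 = 1 * t 0 := by
        rw [one_mul, ← pow_succ, Nat.sub_add_cancel (Nat.one_le_two_pow), hper]
      exact mul_right_cancel₀ ht0 e
    have h2 : ∏ i ∈ range m, (2 * t i) = 2^m * (t 0)^(2^m - 1) := by
      have : ∀ i ∈ range m, 2 * t i = 2 * (t 0)^(2^i) := fun i _ => by rw [htpow i]
      rw [Finset.prod_congr rfl this, Finset.prod_mul_distrib, Finset.prod_const,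
        Finset.card_range, Finset.prod_pow_eq_pow_sum]
      rw [sum_two_pow]
    rw [h2, h1, mul_one] at hprod2
    exact nat_pow_ne_one_complex (b := 2) one_lt_two hm (by exact_mod_cast hprod2)

lemma excl_four (z₀ : ℂ) (m : ℕ) (hm : 1 ≤ m)
    (hfixm : (fun z : ℂ => 4*z*(1-z))^[m] z₀ = z₀)
    (hprod : ∏ i ∈ range m, ((4:ℂ) - 2*4*((fun z : ℂ => 4*z*(1-z))^[i] z₀)) = 1) : False := by
  set g : ℂ → ℂ := fun z => 4*z*(1-z) with hg
  set t : ℕ → ℂ := fun i => 1 - 2*(g^[i] z₀) with ht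
  have htrec : ∀ i, t (i+1) = 2*(t i)^2 - 1 := by
    intro i
    show 1 - 2*(g^[i+1] z₀) = 2*(1 - 2*(g^[i] z₀))^2 - 1
    rw [Function.iterate_succ_apply']
    show 1 - 2*(4 * (g^[i] z₀) * (1 - g^[i] z₀)) = _
    ring
  have hper : t m = t 0 := by
    show 1 - 2*(g^[m] z₀) = 1 - 2*(g^[0] z₀)
    rw [hfixm]; rfl
  have hprod2 : ∏ i ∈ range m, ((4:ℂ) * t i) = 1 := by
    rw [← hprod]
    refine Finset.prod_congr rfl fun i _ => ?_
    show 4 * (1 - 2*(g^[i] z₀)) = 4 - 2*4*(g^[i] z₀)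
    ring
  -- if t 0 = 1 or t 0 = -1, direct contradictions
  have hcase1 : t 0 = 1 → False := by
    intro h1
    have hall : ∀ i, t i = 1 := by
      intro i; induction i with
      | zero => exact h1
      | succ i ih => rw [htrec i, ih]; ring
    have : ∏ i ∈ range m, ((4:ℂ) * t i) = 4^m := by
      rw [Finset.prod_congr rfl (fun i _ => by rw [hall i, mul_one]), Finset.prod_const,
        Finset.card_range]
    rw [this] at hprod2
    exact nat_pow_ne_one_complex (b := 4) (by norm_num) hm (by exact_mod_cast hprod2)
  have hcase2 : t 0 = -1 → False := by
    intro h1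
    have hall : ∀ i, t (i+1) = 1 := by
      intro i; induction i with
      | zero => rw [htrec 0, h1]; ring
      | succ i ih => rw [htrec (i+1), ih]; ring
    have : t m = 1 := by
      obtain ⟨k, rfl⟩ : ∃ k, m = k + 1 := ⟨m - 1, by omega⟩
      exact hall k
    rw [hper, h1] at this
    norm_num at this
  -- general case via u
  obtain ⟨r, hr⟩ := IsAlgClosed.exists_pow_nat_eq ((t 0)^2 - 1) (n := 2) (by norm_num)
  set u : ℂ := t 0 + r with hu
  have hrel : u^2 - 2*(t 0)*u + 1 = 0 := by rw [hu]; linear_combination hr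
  have hu0 : u ≠ 0 := by
    intro e; rw [e] at hrel; norm_num at hrel
  have hginv : u * (2*(t 0) - u) = 1 := by linear_combination -hrel
  have hinv : u⁻¹ = 2*(t 0) - u := inv_eq_of_mul_eq_one_right hginv
  have huinv : u * u⁻¹ = 1 := mul_inv_cancel₀ hu0
  have hdbl : ∀ i, 2 * t i = u^(2^i) + (u⁻¹)^(2^i) := by
    intro i
    induction i with
    | zero => rw [pow_zero, pow_one, pow_one, hinv]; ring
    | succ i ih =>
      have hUU : u^(2^i) * (u⁻¹)^(2^i) = 1 := by
        rw [← mul_pow, huinv, one_pow]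
      rw [htrec i, pow_succ 2 i, pow_mul, pow_mul]
      linear_combination (2 * t i + u^(2^i) + (u⁻¹)^(2^i)) * ih + 2*hUU
  have htel : ∀ k, (∏ i ∈ range k, ((2:ℂ) * t i)) * (u - u⁻¹) = u^(2^k) - (u⁻¹)^(2^k) := by
    intro k
    induction k with
    | zero => simp
    | succ k ih =>
      rw [Finset.prod_range_succ, pow_succ 2 k, pow_mul, pow_mul]
      linear_combination (2 * t k) * ih + (u^(2^k) - (u⁻¹)^(2^k)) * hdbl k
  have hQ : (2:ℂ)^m * ∏ i ∈ range m, ((2:ℂ) * t i) = 1 := by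
    have e : ∏ i ∈ range m, ((4:ℂ) * t i) = ∏ i ∈ range m, ((2:ℂ) * (2 * t i)) :=
      Finset.prod_congr rfl fun i _ => by ring
    rw [e, Finset.prod_mul_distrib, Finset.prod_const, Finset.card_range] at hprod2
    exact hprod2
  have hsum : u^(2^m) + (u⁻¹)^(2^m) = u + u⁻¹ := by
    have e0 := hdbl 0
    rw [pow_zero, pow_one, pow_one] at e0
    rw [← hdbl m, hper, e0]
  have hXinv : u^(2^m) * (u⁻¹)^(2^m) = 1 := by
    rw [← mul_pow, huinv, one_pow]
  have hcase : (u^(2^m) - u) * (u^(2^m) - u⁻¹) = 0 := by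
    linear_combination (u^(2^m)) * hsum - hXinv + huinv
  by_cases hd0 : u - u⁻¹ = 0
  · have hu' : u = u⁻¹ := sub_eq_zero.mp hd0
    have h2 : u * u = 1 := by nth_rewrite 2 [hu']; exact huinv
    have hu2 : (u - 1) * (u + 1) = 0 := by linear_combination h2
    have h0 := hdbl 0
    rw [pow_zero, pow_one, pow_one] at h0
    rcases mul_eq_zero.mp hu2 with h | h
    · have hu1 : u = 1 := sub_eq_zero.mp h
      rw [hu1, inv_one] at h0
      exact hcase1 (by linear_combination h0 / 2)
    · have hu1 : u = -1 := eq_neg_of_add_eq_zero_left h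
      rw [hu1] at h0
      norm_num at h0
      exact hcase2 (by linear_combination h0 / 2)
  · rcases mul_eq_zero.mp hcase with h | h
    · have hX : u^(2^m) = u := sub_eq_zero.mp h
      have hY : (u⁻¹)^(2^m) = u⁻¹ := by rw [inv_pow, hX]
      have e := htel m
      rw [hX, hY] at e
      have hQ1 : ∏ i ∈ range m, ((2:ℂ) * t i) = 1 :=
        mul_right_cancel₀ hd0 (e.trans (one_mul (u - u⁻¹)).symm)
      rw [hQ1, mul_one] at hQ
      exact nat_pow_ne_one_complex (b := 2) one_lt_two hm (by exact_mod_cast hQ)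
    · have hX : u^(2^m) = u⁻¹ := sub_eq_zero.mp h
      have hY : (u⁻¹)^(2^m) = u := by rw [inv_pow, hX, inv_inv]
      have e := htel m
      rw [hX, hY] at e
      have hQ1 : ∏ i ∈ range m, ((2:ℂ) * t i) = -1 := by
        refine mul_right_cancel₀ hd0 ?_
        rw [e]; ring
      rw [hQ1] at hQ
      have hz : ((2^m + 1 : ℕ) : ℂ) = 0 := by push_cast; linear_combination -hQ
      have h0 := Nat.cast_eq_zero.mp hz
      simp at h0

lemma rat_int (a : ℚ) (h : IsIntegral ℤ ((a : ℂ))) : ∃ k : ℤ, (k : ℚ) = a := by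
  have h1 : IsIntegral ℤ a := by
    have e : algebraMap ℚ ℂ a = (a : ℂ) := rfl
    rw [← e] at h
    exact (isIntegral_algebraMap_iff (algebraMap ℚ ℂ).injective).mp h
  exact IsIntegrallyClosed.isIntegral_iff.mp h1

theorem logistic_map_parabolic_parameters :
    -- (1) if g_a(z) = az(1−z) has a parabolic periodic point, a is an algebraic integer:
    (∀ a : ℂ,
      (∃ z₀ : ℂ, ∃ n : ℕ, 1 ≤ n ∧ (fun z : ℂ => a * z * (1 - z))^[n] z₀ = z₀ ∧
        ∃ j : ℕ, 0 < j ∧ (deriv ((fun z : ℂ => a * z * (1 - z))^[n]) z₀) ^ j = 1) →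
      IsIntegral ℤ a) ∧
    -- (2) if moreover a ∈ ℚ with 0 ≤ a ≤ 4, then a = 1 or a = 3:
    (∀ a : ℚ, 0 ≤ a → a ≤ 4 →
      (∃ z₀ : ℂ, ∃ n : ℕ, 1 ≤ n ∧
        (fun z : ℂ => (a : ℂ) * z * (1 - z))^[n] z₀ = z₀ ∧
        ∃ j : ℕ, 0 < j ∧ (deriv ((fun z : ℂ => (a : ℂ) * z * (1 - z))^[n]) z₀) ^ j = 1) →
      a = 1 ∨ a = 3) ∧
    -- (3) conversely, g₁ and g₃ have parabolic fixed points 0 and 2/3, with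
    -- multipliers 1 and −1 respectively:
    ((fun z : ℂ => 1 * z * (1 - z)) 0 = 0 ∧
      deriv (fun z : ℂ => 1 * z * (1 - z)) 0 = 1 ∧
      (fun z : ℂ => 3 * z * (1 - z)) (2 / 3 : ℂ) = (2 / 3 : ℂ) ∧
      deriv (fun z : ℂ => 3 * z * (1 - z)) (2 / 3 : ℂ) = -1) := by
  refine ⟨part1, ?_, ?_, ?_, ?_, ?_⟩
  · intro a ha0 ha4 h
    obtain ⟨k, hk⟩ := rat_int a (part1 _ h)
    subst hk
    have hk0 : (0:ℤ) ≤ k := by exact_mod_cast ha0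
    have hk4 : k ≤ 4 := by exact_mod_cast ha4
    interval_cases k
    · -- k = 0
      exfalso
      push_cast at h
      obtain ⟨z₀, n, hn, hfix, j, hj, hpar⟩ := h
      obtain ⟨m, hm, hfixm, hprod⟩ := multiplier_prod 0 z₀ n j hn hj hfix hpar
      exact excl_zero z₀ m hm hprod
    · left; norm_num
    · -- k = 2
      exfalso
      push_cast at h
      obtain ⟨z₀, n, hn, hfix, j, hj, hpar⟩ := h
      obtain ⟨m, hm, hfixm, hprod⟩ := multiplier_prod 2 z₀ n j hn hj hfix hpar
      exact excl_two z₀ m hm hfixm hprod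
    · right; norm_num
    · -- k = 4
      exfalso
      push_cast at h
      obtain ⟨z₀, n, hn, hfix, j, hj, hpar⟩ := h
      obtain ⟨m, hm, hfixm, hprod⟩ := multiplier_prod 4 z₀ n j hn hj hfix hpar
      exact excl_four z₀ m hm hfixm hprod
  · norm_num
  · have h := (logistic_hasDerivAt 1 0).deriv
    rw [h]; norm_num
  · norm_num
  · have h := (logistic_hasDerivAt 3 (2/3 : ℂ)).deriv
    rw [h]; norm_num
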